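/- Let A, A', B, B', C, C' be nonempty finite types, 𝓔₁ a channel from A' × B' to A × B, and 𝓔₂ a channel from B' × C' to B × C. The following are equivalent. (1) There exist N : ℕ, Hermitian matrices H₁ : Fin N → Matrix (A × B) (A × B) ℂ and H₂ : Fin N → Matrix (B × C) (B × C) ℂ, and quantum states ρ₁ : Fin N → Matrix (A' × B') (A' × B') ℂ and ρ₂ : Fin N → Matrix (B' × C') (B' × C') ℂ such that for every compatible pair of channels (𝓛₁, 𝓛₂): ∑ i, (trace (H₁ i * 𝓛₁ (ρ₁ i))).re + ∑ i, (trace (H₂ i * 𝓛₂ (ρ₂ i))).re < ∑ i, (trace (H₁ i * 𝓔₁ (ρ₁ i))).re + ∑ i, (trace (H₂ i * 𝓔₂ (ρ₂ i))).re. (2) There exists a strictly positive ensemble state discrimination task D — reals p₁, p₂ > 0 with p₁ + p₂ = 1; nonempty finite index types ι₁, ι₂; weights q₁ : ι₁ → ℝ, q₂ : ι₂ → ℝ with all values positive and summing to 1; states ρ₁ : ι₁ → Matrix (A' × B') (A' × B') ℂ, ρ₂ : ι₂ → Matrix (B' × C') (B' × C') ℂ; POVMs M₁ : ι₁ → Matrix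 (A × B) (A × B) ℂ, M₂ : ι₂ → Matrix (B × C) (B × C) ℂ with each element positive definite and summing to the identity — such that P(D, 𝓛₁, 𝓛₂) < P(D, 𝓔₁, 𝓔₂) for every compatible pair (𝓛₁, 𝓛₂), where P(D, 𝓝₁, 𝓝₂) := p₁ * ∑ i, q₁ i * (trace (M₁ i * 𝓝₁ (ρ₁ i))).re + p₂ * ∑ j, q₂ j * (trace (M₂ j * 𝓝₂ (ρ₂ j))).re. -/

import Mathlib

open Matrix Kronecker
open scoped ComplexOrder

noncomputable section

/-- A quantum state: positive semidefinite with unit trace. -/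
def IsState {n : Type*} [Fintype n] (ρ : Matrix n n ℂ) : Prop :=
  ρ.PosSemidef ∧ ρ.trace = 1

/-- The Choi matrix of a linear map on matrices. -/
def choi {n m : Type*} [Fintype n] [DecidableEq n]
    (𝓔 : Matrix n n ℂ →ₗ[ℂ] Matrix m m ℂ) : Matrix (m × n) (m × n) ℂ :=
  Matrix.of fun p q =>
    (1 / (Fintype.card n : ℂ)) * 𝓔 (Matrix.single p.2 q.2 1) p.1 q.1

/-- A quantum channel: trace preserving and completely positive. -/
def IsChannel {n m : Type*} [Fintype n] [DecidableEq n] [Fintype m]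
    (𝓔 : Matrix n n ℂ →ₗ[ℂ] Matrix m m ℂ) : Prop :=
  (∀ ρ : Matrix n n ℂ, (𝓔 ρ).trace = ρ.trace) ∧ (choi 𝓔).PosSemidef

/-- Partial trace over the second (right) factor. -/
def trR {a b : Type*} [Fintype b] (M : Matrix (a × b) (a × b) ℂ) : Matrix a a ℂ :=
  Matrix.of fun i j => ∑ k, M (i, k) (j, k)

/-- Partial trace over the first (left) factor. -/
def trL {a b : Type*} [Fintype a] (M : Matrix (a × b) (a × b) ℂ) : Matrix b b ℂ :=
  Matrix.of fun i j => ∑ k, M (k, i) (k, j)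

/-- Partial trace over the third factor of a triple product. -/
def trC3 {a b c : Type*} [Fintype c] (M : Matrix (a × b × c) (a × b × c) ℂ) :
    Matrix (a × b) (a × b) ℂ :=
  Matrix.of fun i j => ∑ k, M (i.1, i.2, k) (j.1, j.2, k)

/-- Compatibility of two local channels with a single global channel. -/
def Compatible {A A' B B' C C' : Type*}
    [Fintype A] [Fintype A'] [Fintype B] [Fintype B'] [Fintype C] [Fintype C']
    [DecidableEq A'] [DecidableEq B'] [DecidableEq C']
    (𝓔₁ : Matrix (A' × B') (A' × B') ℂ →ₗ[ℂ] Matrix (A × B) (A × B) ℂ)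
    (𝓔₂ : Matrix (B' × C') (B' × C') ℂ →ₗ[ℂ] Matrix (B × C) (B × C) ℂ) : Prop :=
  ∃ 𝓔 : Matrix (A' × B' × C') (A' × B' × C') ℂ →ₗ[ℂ] Matrix (A × B × C) (A × B × C) ℂ,
    IsChannel 𝓔 ∧ ∀ ρ : Matrix (A' × B' × C') (A' × B' × C') ℂ, IsState ρ →
      trC3 (𝓔 ρ) = 𝓔₁ (trC3 ρ) ∧ trL (𝓔 ρ) = 𝓔₂ (trL ρ)

/-! ### Auxiliary lemmas -/

lemma quadForm_star' {n : Type*} [Fintype n] (M : Matrix n n ℂ) (hM : M.IsHermitian)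
    (x : n → ℂ) : star (star x ⬝ᵥ (M *ᵥ x)) = star x ⬝ᵥ (M *ᵥ x) := by
  rw [← star_dotProduct, star_mulVec, ← dotProduct_mulVec, hM.eq]

lemma posdef_shift' {n : Type*} [Fintype n] [DecidableEq n] (H : Matrix n n ℂ)
    (hH : H.IsHermitian) (c : ℝ) (hc : (∑ i, ∑ j, ‖H i j‖) < c) :
    (((c : ℂ)) • 1 + H).PosDef := by
  have hM : (((c : ℂ)) • 1 + H).IsHermitian := by
    refine Matrix.IsHermitian.add ?_ hH
    unfold Matrix.IsHermitian
    rw [conjTranspose_smul, conjTranspose_one]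
    simp [Complex.conj_ofReal]
  refine Matrix.PosDef.of_dotProduct_mulVec_pos hM fun x hx => ?_
  set z := star x ⬝ᵥ ((((c : ℂ)) • 1 + H) *ᵥ x) with hz
  have him : z.im = 0 := Complex.conj_eq_iff_im.mp (quadForm_star' _ hM x)
  rw [Complex.pos_iff]
  refine ⟨?_, him.symm⟩
  set S : ℝ := ∑ i, Complex.normSq (x i) with hS
  have hSpos : 0 < S := by
    obtain ⟨i, hi⟩ := Function.ne_iff.mp hx
    exact Finset.sum_pos' (fun j _ => Complex.normSq_nonneg _)
      ⟨i, Finset.mem_univ i, by simpa [Complex.normSq_pos] using hi⟩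
  set w := star x ⬝ᵥ (H *ᵥ x) with hw
  have hsplit : z = (c : ℂ) * (S : ℂ) + w := by
    rw [hz, add_mulVec, dotProduct_add, smul_mulVec, one_mulVec, dotProduct_smul]
    congr 1
    rw [smul_eq_mul]
    congr 1
    simp [dotProduct, hS, Complex.normSq_eq_conj_mul_self, Complex.ofReal_sum]
  have habsx : ∀ i, ‖x i‖ ^ 2 ≤ S := by
    intro i
    calc ‖x i‖ ^ 2 = Complex.normSq (x i) := Complex.sq_norm _
      _ ≤ S := Finset.single_le_sum (fun j _ => Complex.normSq_nonneg _) (Finset.mem_univ i)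
  have hxx : ∀ i j, ‖x i‖ * ‖x j‖ ≤ S := by
    intro i j
    nlinarith [habsx i, habsx j, norm_nonneg (x i), norm_nonneg (x j)]
  have hwbound : ‖w‖ ≤ (∑ i, ∑ j, ‖H i j‖) * S := by
    have hw' : w = ∑ i, star (x i) * (H *ᵥ x) i := rfl
    calc ‖w‖ = ‖∑ i, star (x i) * (H *ᵥ x) i‖ := by rw [hw']
      _ ≤ ∑ i, ‖star (x i) * (H *ᵥ x) i‖ := norm_sum_le _ _
      _ = ∑ i, ‖x i‖ * ‖(H *ᵥ x) i‖ := by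
          simp [_root_.map_mul]
      _ ≤ ∑ i, ‖x i‖ * ∑ j, ‖H i j‖ * ‖x j‖ := by
          refine Finset.sum_le_sum fun i _ => ?_
          refine mul_le_mul_of_nonneg_left ?_ (norm_nonneg _)
          calc ‖(H *ᵥ x) i‖ = ‖∑ j, H i j * x j‖ := rfl
            _ ≤ ∑ j, ‖H i j * x j‖ := norm_sum_le _ _
            _ = ∑ j, ‖H i j‖ * ‖x j‖ := by simp [_root_.map_mul]
      _ = ∑ i, ∑ j, ‖x i‖ * (‖H i j‖ * ‖x j‖) := by
          simp [Finset.mul_sum]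
      _ ≤ ∑ i, ∑ j, ‖H i j‖ * S := by
          refine Finset.sum_le_sum fun i _ => Finset.sum_le_sum fun j _ => ?_
          have := hxx i j
          nlinarith [norm_nonneg (H i j), norm_nonneg (x i),
            norm_nonneg (x j)]
      _ = (∑ i, ∑ j, ‖H i j‖) * S := by
          rw [Finset.sum_mul]
          exact Finset.sum_congr rfl fun i _ => (Finset.sum_mul _ _ _).symm
  have hre : z.re = c * S + w.re := by
    rw [hsplit, ← Complex.ofReal_mul]
    simp
  rw [hre]
  nlinarith [hSpos, hc, hwbound, Complex.abs_re_le_norm w, neg_abs_le w.re]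

lemma isState_mm' (n : Type*) [Fintype n] [DecidableEq n] [Nonempty n] :
    IsState ((((Fintype.card n : ℝ)⁻¹ : ℝ) : ℂ) • (1 : Matrix n n ℂ)) := by
  have hcard : (0 : ℝ) < (Fintype.card n : ℝ) := by
    exact_mod_cast Fintype.card_pos
  constructor
  · have : (((((Fintype.card n : ℝ)⁻¹ : ℝ)) : ℂ) • (1 : Matrix n n ℂ)) =
        Matrix.diagonal (fun _ => ((((Fintype.card n : ℝ)⁻¹ : ℝ)) : ℂ)) := by
      ext i j
      by_cases h : i = j <;> simp [Matrix.diagonal, Matrix.one_apply, h]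
    rw [this]
    refine Matrix.PosSemidef.diagonal ?_
    intro i
    simp only [Pi.zero_apply]
    rw [Complex.zero_le_real]
    positivity
  · rw [Matrix.trace_smul, Matrix.trace_one, smul_eq_mul]
    rw [← Complex.ofReal_natCast, ← Complex.ofReal_mul]
    rw [inv_mul_cancel₀ hcard.ne']
    simp

lemma real_smul_hermitian' {n : Type*} [Fintype n] (r : ℝ) {M : Matrix n n ℂ}
    (h : M.IsHermitian) : (((r : ℂ)) • M).IsHermitian := by
  unfold Matrix.IsHermitian at *
  rw [Matrix.conjTranspose_smul, h]
  simp [Complex.conj_ofReal]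

lemma trace_real_smul_mul_re' {n : Type*} [Fintype n] (r : ℝ) (M X : Matrix n n ℂ) :
    ((((r : ℂ)) • M * X).trace).re = r * ((M * X).trace).re := by
  rw [Matrix.smul_mul, Matrix.trace_smul, smul_eq_mul, Complex.re_ofReal_mul]

lemma posdef_real_smul' {n : Type*} [Fintype n] {r : ℝ} (hr : 0 < r) {M : Matrix n n ℂ}
    (h : M.PosDef) : (((r : ℂ)) • M).PosDef := by
  refine Matrix.PosDef.of_dotProduct_mulVec_pos (real_smul_hermitian' r h.isHermitian) fun x hx => ?_
  have h2 := h.dotProduct_mulVec_pos hx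
  rw [smul_mulVec, dotProduct_smul, smul_eq_mul]
  rw [Complex.pos_iff] at h2 ⊢
  constructor
  · rw [Complex.re_ofReal_mul]; exact mul_pos hr h2.1
  · rw [Complex.mul_im]; simp [← h2.2]

lemma trace_shift_re {m : Type*} [Fintype m] [DecidableEq m] (c α : ℝ)
    (H X : Matrix m m ℂ) (hX : X.trace = 1) :
    ((((α : ℂ)) • (((c : ℂ)) • 1 + H) * X).trace).re
      = α * (c + ((H * X).trace).re) := by
  rw [Matrix.smul_mul, Matrix.trace_smul, smul_eq_mul, Complex.re_ofReal_mul,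
    add_mul, Matrix.smul_mul, one_mul, Matrix.trace_add, Matrix.trace_smul,
    smul_eq_mul, hX, mul_one]
  simp

lemma trace_shift_re' {m : Type*} [Fintype m] [DecidableEq m] (c α : ℝ)
    (H X : Matrix m m ℂ) (hX : X.trace = 1) :
    ((((α : ℂ)) • (((c : ℂ)) • 1 - H) * X).trace).re
      = α * (c - ((H * X).trace).re) := by
  rw [Matrix.smul_mul, Matrix.trace_smul, smul_eq_mul, Complex.re_ofReal_mul,
    sub_mul, Matrix.smul_mul, one_mul, Matrix.trace_sub, Matrix.trace_smul,
    smul_eq_mul, hX, mul_one]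
  simp

lemma key_sum {n m : Type*} [Fintype n] [DecidableEq n] [Fintype m] [DecidableEq m]
    (M : ℕ) (H : Fin M → Matrix m m ℂ) (ρ : Fin M → Matrix n n ℂ)
    (hρ : ∀ i, IsState (ρ i)) (c a b α : ℝ)
    (𝓛 : Matrix n n ℂ →ₗ[ℂ] Matrix m m ℂ) (h𝓛 : ∀ X, (𝓛 X).trace = X.trace) :
    ∑ i : Fin (M + M),
      (Fin.addCases (motive := fun _ => ℝ) (fun _ => a) (fun _ => b) i) *
      (((Fin.addCases (motive := fun _ => Matrix m m ℂ)
          (fun i => ((α : ℂ)) • (((c : ℂ)) • 1 + H i))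
          (fun i => ((α : ℂ)) • (((c : ℂ)) • 1 - H i)) i) *
        𝓛 (Fin.addCases (motive := fun _ => Matrix n n ℂ) ρ ρ i)).trace).re
    = (M : ℝ) * (α * c * (a + b))
        + (α * (a - b)) * ∑ i, ((H i * 𝓛 (ρ i)).trace).re := by
  have hL : ∀ i : Fin M, (𝓛 (ρ i)).trace = 1 := fun i => by rw [h𝓛, (hρ i).2]
  rw [Fin.sum_univ_add]
  simp only [Fin.addCases_left, Fin.addCases_right]
  have e1 : (∑ i : Fin M, a * ((((α : ℂ)) • (((c : ℂ)) • 1 + H i) * 𝓛 (ρ i)).trace).re)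
      = ∑ i : Fin M, a * (α * (c + ((H i * 𝓛 (ρ i)).trace).re)) :=
    Finset.sum_congr rfl fun i _ => by rw [trace_shift_re c α (H i) _ (hL i)]
  have e2 : (∑ i : Fin M, b * ((((α : ℂ)) • (((c : ℂ)) • 1 - H i) * 𝓛 (ρ i)).trace).re)
      = ∑ i : Fin M, b * (α * (c - ((H i * 𝓛 (ρ i)).trace).re)) :=
    Finset.sum_congr rfl fun i _ => by rw [trace_shift_re' c α (H i) _ (hL i)]
  rw [e1, e2, ← Finset.sum_add_distrib]
  have e3 : (∑ i : Fin M, (a * (α * (c + ((H i * 𝓛 (ρ i)).trace).re))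
        + b * (α * (c - ((H i * 𝓛 (ρ i)).trace).re))))
      = ∑ i : Fin M, (α * c * (a + b) + (α * (a - b)) * ((H i * 𝓛 (ρ i)).trace).re) :=
    Finset.sum_congr rfl fun i _ => by ring
  rw [e3, Finset.sum_add_distrib, Finset.sum_const, ← Finset.mul_sum]
  simp [nsmul_eq_mul]

lemma sum_povm_one {m : Type*} [Fintype m] [DecidableEq m]
    (M : ℕ) (hM : 0 < M) (H : Fin M → Matrix m m ℂ) (c : ℝ) (hc : 0 < c) :
    ∑ i : Fin (M + M),
      (Fin.addCases (motive := fun _ => Matrix m m ℂ)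
        (fun i => ((((2 * (M : ℝ) * c)⁻¹ : ℝ) : ℂ)) • (((c : ℂ)) • 1 + H i))
        (fun i => ((((2 * (M : ℝ) * c)⁻¹ : ℝ) : ℂ)) • (((c : ℂ)) • 1 - H i)) i)
      = (1 : Matrix m m ℂ) := by
  rw [Fin.sum_univ_add]
  simp only [Fin.addCases_left, Fin.addCases_right]
  rw [← Finset.smul_sum, ← Finset.smul_sum, ← smul_add, ← Finset.sum_add_distrib]
  have h1 : ∀ i : Fin M, (((c : ℂ)) • 1 + H i) + (((c : ℂ)) • 1 - H i)
      = ((2 * c : ℝ) : ℂ) • (1 : Matrix m m ℂ) := by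
    intro i
    push_cast
    module
  rw [Finset.sum_congr rfl (fun i _ => h1 i), Finset.sum_const, Finset.card_univ,
    Fintype.card_fin]
  rw [show (M • (((2 * c : ℝ) : ℂ) • (1 : Matrix m m ℂ)))
      = ((M : ℂ) * ((2 * c : ℝ) : ℂ)) • (1 : Matrix m m ℂ) by
    rw [← smul_smul, ← Nat.cast_smul_eq_nsmul ℂ]]
  rw [smul_smul]
  rw [show ((((2 * (M : ℝ) * c)⁻¹ : ℝ) : ℂ)) * ((M : ℂ) * ((2 * c : ℝ) : ℂ)) = 1 by
    push_cast
    have hM' : ((M : ℝ) : ℂ) ≠ (0 : ℂ) := by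
      simp only [ne_eq, Complex.ofReal_eq_zero, Nat.cast_eq_zero]
      exact hM.ne'
    have hc' : ((c : ℝ) : ℂ) ≠ 0 := by
      simpa using (Complex.ofReal_ne_zero.mpr hc.ne')
    field_simp]
  rw [one_smul]

lemma fin_addCases_cases {m n : ℕ} (i : Fin (m + n)) :
    (∃ j : Fin m, i = Fin.castAdd n j) ∨ (∃ j : Fin n, i = Fin.natAdd m j) := by
  by_cases h : (i : ℕ) < m
  · exact Or.inl ⟨⟨i, h⟩, by ext; simp⟩
  · refine Or.inr ⟨⟨(i : ℕ) - m, by omega⟩, by ext; simp [Fin.natAdd]; omega⟩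

/-- Theorem 3 of the appendix: a finite Hermitian-operator witness for `𝓔₁, 𝓔₂` against
all compatible pairs exists iff a strictly positive ensemble state discrimination task
exists in which `𝓔₁, 𝓔₂` strictly outperform every compatible pair. -/
theorem witness_iff_discrimination_task
    {A A' B B' C C' : Type*}
    [Fintype A] [DecidableEq A] [Nonempty A] [Fintype A'] [DecidableEq A'] [Nonempty A']
    [Fintype B] [DecidableEq B] [Nonempty B] [Fintype B'] [DecidableEq B'] [Nonempty B']
    [Fintype C] [DecidableEq C] [Nonempty C] [Fintype C'] [DecidableEq C'] [Nonempty C']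
    (𝓔₁ : Matrix (A' × B') (A' × B') ℂ →ₗ[ℂ] Matrix (A × B) (A × B) ℂ)
    (𝓔₂ : Matrix (B' × C') (B' × C') ℂ →ₗ[ℂ] Matrix (B × C) (B × C) ℂ)
    (h₁ : IsChannel 𝓔₁) (h₂ : IsChannel 𝓔₂) :
    (∃ (N : ℕ) (H₁ : Fin N → Matrix (A × B) (A × B) ℂ)
        (H₂ : Fin N → Matrix (B × C) (B × C) ℂ)
        (ρ₁ : Fin N → Matrix (A' × B') (A' × B') ℂ)
        (ρ₂ : Fin N → Matrix (B' × C') (B' × C') ℂ),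
        (∀ i, (H₁ i).IsHermitian) ∧ (∀ i, (H₂ i).IsHermitian) ∧
        (∀ i, IsState (ρ₁ i)) ∧ (∀ i, IsState (ρ₂ i)) ∧
        ∀ (𝓛₁ : Matrix (A' × B') (A' × B') ℂ →ₗ[ℂ] Matrix (A × B) (A × B) ℂ)
          (𝓛₂ : Matrix (B' × C') (B' × C') ℂ →ₗ[ℂ] Matrix (B × C) (B × C) ℂ),
          IsChannel 𝓛₁ → IsChannel 𝓛₂ → Compatible 𝓛₁ 𝓛₂ →
          (∑ i, ((H₁ i * 𝓛₁ (ρ₁ i)).trace).re) + (∑ i, ((H₂ i * 𝓛₂ (ρ₂ i)).trace).re) <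
            (∑ i, ((H₁ i * 𝓔₁ (ρ₁ i)).trace).re) + (∑ i, ((H₂ i * 𝓔₂ (ρ₂ i)).trace).re)) ↔
    (∃ (p₁ p₂ : ℝ), 0 < p₁ ∧ 0 < p₂ ∧ p₁ + p₂ = 1 ∧
      ∃ (n₁ n₂ : ℕ), 0 < n₁ ∧ 0 < n₂ ∧
      ∃ (q₁ : Fin n₁ → ℝ) (q₂ : Fin n₂ → ℝ),
        (∀ i, 0 < q₁ i) ∧ (∀ j, 0 < q₂ j) ∧ (∑ i, q₁ i) = 1 ∧ (∑ j, q₂ j) = 1 ∧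
      ∃ (ρ₁ : Fin n₁ → Matrix (A' × B') (A' × B') ℂ)
        (ρ₂ : Fin n₂ → Matrix (B' × C') (B' × C') ℂ),
        (∀ i, IsState (ρ₁ i)) ∧ (∀ j, IsState (ρ₂ j)) ∧
      ∃ (M₁ : Fin n₁ → Matrix (A × B) (A × B) ℂ)
        (M₂ : Fin n₂ → Matrix (B × C) (B × C) ℂ),
        (∀ i, (M₁ i).PosDef) ∧ (∀ j, (M₂ j).PosDef) ∧
        (∑ i, M₁ i) = 1 ∧ (∑ j, M₂ j) = 1 ∧
        ∀ (𝓛₁ : Matrix (A' × B') (A' × B') ℂ →ₗ[ℂ] Matrix (A × B) (A × B) ℂ)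
          (𝓛₂ : Matrix (B' × C') (B' × C') ℂ →ₗ[ℂ] Matrix (B × C) (B × C) ℂ),
          IsChannel 𝓛₁ → IsChannel 𝓛₂ → Compatible 𝓛₁ 𝓛₂ →
          p₁ * (∑ i, q₁ i * ((M₁ i * 𝓛₁ (ρ₁ i)).trace).re) +
              p₂ * (∑ j, q₂ j * ((M₂ j * 𝓛₂ (ρ₂ j)).trace).re) <
            p₁ * (∑ i, q₁ i * ((M₁ i * 𝓔₁ (ρ₁ i)).trace).re) +
              p₂ * (∑ j, q₂ j * ((M₂ j * 𝓔₂ (ρ₂ j)).trace).re)) := by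
  constructor
  · rintro ⟨N, H₁, H₂, ρ₁, ρ₂, hH₁, hH₂, hρ₁, hρ₂, hW⟩
    -- pad the witness so that the index set is nonempty
    set mm₁ : Matrix (A' × B') (A' × B') ℂ :=
      (((Fintype.card (A' × B') : ℝ)⁻¹ : ℝ) : ℂ) • 1 with hmm₁
    set mm₂ : Matrix (B' × C') (B' × C') ℂ :=
      (((Fintype.card (B' × C') : ℝ)⁻¹ : ℝ) : ℂ) • 1 with hmm₂
    set M : ℕ := N + 1 with hMdef
    set G₁ : Fin M → Matrix (A × B) (A × B) ℂ := Fin.snoc H₁ 0 with hG₁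
    set G₂ : Fin M → Matrix (B × C) (B × C) ℂ := Fin.snoc H₂ 0 with hG₂
    set σ₁ : Fin M → Matrix (A' × B') (A' × B') ℂ := Fin.snoc ρ₁ mm₁ with hσ₁
    set σ₂ : Fin M → Matrix (B' × C') (B' × C') ℂ := Fin.snoc ρ₂ mm₂ with hσ₂
    have hG₁h : ∀ i, (G₁ i).IsHermitian := by
      intro i
      refine Fin.lastCases ?_ ?_ i
      · simp [hG₁, Matrix.isHermitian_zero]
      · intro j; simpa [hG₁] using hH₁ j
    have hG₂h : ∀ i, (G₂ i).IsHermitian := by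
      intro i
      refine Fin.lastCases ?_ ?_ i
      · simp [hG₂, Matrix.isHermitian_zero]
      · intro j; simpa [hG₂] using hH₂ j
    have hσ₁s : ∀ i, IsState (σ₁ i) := by
      intro i
      refine Fin.lastCases ?_ ?_ i
      · simpa [hσ₁, hmm₁] using isState_mm' (A' × B')
      · intro j; simpa [hσ₁] using hρ₁ j
    have hσ₂s : ∀ i, IsState (σ₂ i) := by
      intro i
      refine Fin.lastCases ?_ ?_ i
      · simpa [hσ₂, hmm₂] using isState_mm' (B' × C')
      · intro j; simpa [hσ₂] using hρ₂ j
    have hsum₁ : ∀ (𝓛 : Matrix (A' × B') (A' × B') ℂ →ₗ[ℂ] Matrix (A × B) (A × B) ℂ),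
        (∑ i, ((G₁ i * 𝓛 (σ₁ i)).trace).re) = ∑ i, ((H₁ i * 𝓛 (ρ₁ i)).trace).re := by
      intro 𝓛
      rw [Fin.sum_univ_castSucc]
      simp [hG₁, hσ₁]
    have hsum₂ : ∀ (𝓛 : Matrix (B' × C') (B' × C') ℂ →ₗ[ℂ] Matrix (B × C) (B × C) ℂ),
        (∑ i, ((G₂ i * 𝓛 (σ₂ i)).trace).re) = ∑ i, ((H₂ i * 𝓛 (ρ₂ i)).trace).re := by
      intro 𝓛
      rw [Fin.sum_univ_castSucc]
      simp [hG₂, hσ₂]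
    set C₁ : ℝ := ∑ i, ∑ p, ∑ q, ‖G₁ i p q‖ with hC₁
    set C₂ : ℝ := ∑ i, ∑ p, ∑ q, ‖G₂ i p q‖ with hC₂
    have hC₁0 : 0 ≤ C₁ := by rw [hC₁]; positivity
    have hC₂0 : 0 ≤ C₂ := by rw [hC₂]; positivity
    set c : ℝ := C₁ + C₂ + 1 with hcdef
    have hc : 0 < c := by rw [hcdef]; linarith
    have hb₁ : ∀ i, (∑ p, ∑ q, ‖G₁ i p q‖) < c := by
      intro i
      have h1 : (∑ p, ∑ q, ‖G₁ i p q‖) ≤ C₁ := by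
        rw [hC₁]
        exact Finset.single_le_sum
          (f := fun j => ∑ p, ∑ q, ‖G₁ j p q‖)
          (fun j _ => by positivity) (Finset.mem_univ i)
      rw [hcdef]; linarith
    have hb₂ : ∀ i, (∑ p, ∑ q, ‖G₂ i p q‖) < c := by
      intro i
      have h1 : (∑ p, ∑ q, ‖G₂ i p q‖) ≤ C₂ := by
        rw [hC₂]
        exact Finset.single_le_sum
          (f := fun j => ∑ p, ∑ q, ‖G₂ j p q‖)
          (fun j _ => by positivity) (Finset.mem_univ i)
      rw [hcdef]; linarith
    have hMpos : 0 < M := Nat.succ_pos N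
    have hMR : (0 : ℝ) < (M : ℝ) := by exact_mod_cast hMpos
    set α : ℝ := (2 * (M : ℝ) * c)⁻¹ with hαdef
    have hα : 0 < α := by rw [hαdef]; positivity
    set a : ℝ := 2 / (3 * (M : ℝ)) with hadef
    set b : ℝ := 1 / (3 * (M : ℝ)) with hbdef
    have ha : 0 < a := by rw [hadef]; positivity
    have hbpos : 0 < b := by rw [hbdef]; positivity
    have hba : b < a := by rw [hadef, hbdef]; gcongr <;> norm_num
    refine ⟨1/2, 1/2, by norm_num, by norm_num, by norm_num, M + M, M + M,
      by omega, by omega,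
      Fin.addCases (motive := fun _ => ℝ) (fun _ => a) (fun _ => b),
      Fin.addCases (motive := fun _ => ℝ) (fun _ => a) (fun _ => b),
      ?_, ?_, ?_, ?_,
      Fin.addCases (motive := fun _ => Matrix (A' × B') (A' × B') ℂ) σ₁ σ₁,
      Fin.addCases (motive := fun _ => Matrix (B' × C') (B' × C') ℂ) σ₂ σ₂,
      ?_, ?_,
      Fin.addCases (motive := fun _ => Matrix (A × B) (A × B) ℂ)
        (fun i => ((α : ℂ)) • (((c : ℂ)) • 1 + G₁ i))
        (fun i => ((α : ℂ)) • (((c : ℂ)) • 1 - G₁ i)),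
      Fin.addCases (motive := fun _ => Matrix (B × C) (B × C) ℂ)
        (fun i => ((α : ℂ)) • (((c : ℂ)) • 1 + G₂ i))
        (fun i => ((α : ℂ)) • (((c : ℂ)) • 1 - G₂ i)),
      ?_, ?_, ?_, ?_, ?_⟩
    · intro i
      rcases fin_addCases_cases i with ⟨j, rfl⟩ | ⟨j, rfl⟩
      · rw [Fin.addCases_left]; exact ha
      · rw [Fin.addCases_right]; exact hbpos
    · intro i
      rcases fin_addCases_cases i with ⟨j, rfl⟩ | ⟨j, rfl⟩
      · rw [Fin.addCases_left]; exact ha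
      · rw [Fin.addCases_right]; exact hbpos
    · rw [Fin.sum_univ_add]
      simp only [Fin.addCases_left, Fin.addCases_right, Finset.sum_const,
        Finset.card_univ, Fintype.card_fin, nsmul_eq_mul]
      rw [hadef, hbdef]
      field_simp
      ring
    · rw [Fin.sum_univ_add]
      simp only [Fin.addCases_left, Fin.addCases_right, Finset.sum_const,
        Finset.card_univ, Fintype.card_fin, nsmul_eq_mul]
      rw [hadef, hbdef]
      field_simp
      ring
    · intro i
      rcases fin_addCases_cases i with ⟨j, rfl⟩ | ⟨j, rfl⟩
      · rw [Fin.addCases_left]; exact hσ₁s j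
      · rw [Fin.addCases_right]; exact hσ₁s j
    · intro i
      rcases fin_addCases_cases i with ⟨j, rfl⟩ | ⟨j, rfl⟩
      · rw [Fin.addCases_left]; exact hσ₂s j
      · rw [Fin.addCases_right]; exact hσ₂s j
    · intro i
      rcases fin_addCases_cases i with ⟨j, rfl⟩ | ⟨j, rfl⟩
      · rw [Fin.addCases_left]
        exact posdef_real_smul' hα (posdef_shift' (G₁ j) (hG₁h j) c (hb₁ j))
      · rw [Fin.addCases_right]
        rw [sub_eq_add_neg]
        refine posdef_real_smul' hα (posdef_shift' (-(G₁ j)) ((hG₁h j).neg) c ?_)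
        simpa using hb₁ j
    · intro i
      rcases fin_addCases_cases i with ⟨j, rfl⟩ | ⟨j, rfl⟩
      · rw [Fin.addCases_left]
        exact posdef_real_smul' hα (posdef_shift' (G₂ j) (hG₂h j) c (hb₂ j))
      · rw [Fin.addCases_right]
        rw [sub_eq_add_neg]
        refine posdef_real_smul' hα (posdef_shift' (-(G₂ j)) ((hG₂h j).neg) c ?_)
        simpa using hb₂ j
    · rw [hαdef]; exact sum_povm_one M hMpos G₁ c hc
    · rw [hαdef]; exact sum_povm_one M hMpos G₂ c hc
    · intro 𝓛₁ 𝓛₂ hch₁ hch₂ hcomp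
      have hw := hW 𝓛₁ 𝓛₂ hch₁ hch₂ hcomp
      rw [key_sum M G₁ σ₁ hσ₁s c a b α 𝓛₁ hch₁.1,
        key_sum M G₂ σ₂ hσ₂s c a b α 𝓛₂ hch₂.1,
        key_sum M G₁ σ₁ hσ₁s c a b α 𝓔₁ h₁.1,
        key_sum M G₂ σ₂ hσ₂s c a b α 𝓔₂ h₂.1,
        hsum₁ 𝓛₁, hsum₂ 𝓛₂, hsum₁ 𝓔₁, hsum₂ 𝓔₂]
      have hγ : 0 < α * (a - b) := mul_pos hα (by linarith)
      nlinarith [hw, hγ]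
  · rintro ⟨p₁, p₂, hp₁, hp₂, hp, n₁, n₂, hn₁, hn₂, q₁, q₂, hq₁, hq₂, hq₁s, hq₂s,
      ρ₁, ρ₂, hρ₁, hρ₂, M₁, M₂, hM₁, hM₂, hM₁s, hM₂s, hlt⟩
    set mm₁ : Matrix (A' × B') (A' × B') ℂ :=
      (((Fintype.card (A' × B') : ℝ)⁻¹ : ℝ) : ℂ) • 1 with hmm₁
    set mm₂ : Matrix (B' × C') (B' × C') ℂ :=
      (((Fintype.card (B' × C') : ℝ)⁻¹ : ℝ) : ℂ) • 1 with hmm₂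
    refine ⟨n₁ + n₂,
      Fin.addCases (motive := fun _ => Matrix (A × B) (A × B) ℂ)
        (fun i => (((p₁ * q₁ i : ℝ)) : ℂ) • M₁ i) (fun _ => 0),
      Fin.addCases (motive := fun _ => Matrix (B × C) (B × C) ℂ)
        (fun _ => 0) (fun j => (((p₂ * q₂ j : ℝ)) : ℂ) • M₂ j),
      Fin.addCases (motive := fun _ => Matrix (A' × B') (A' × B') ℂ) ρ₁ (fun _ => mm₁),
      Fin.addCases (motive := fun _ => Matrix (B' × C') (B' × C') ℂ) (fun _ => mm₂) ρ₂,
      ?_, ?_, ?_, ?_, ?_⟩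
    · intro i
      rcases fin_addCases_cases i with ⟨j, rfl⟩ | ⟨j, rfl⟩
      · rw [Fin.addCases_left]
        exact real_smul_hermitian' _ (hM₁ j).isHermitian
      · rw [Fin.addCases_right]
        exact Matrix.isHermitian_zero
    · intro i
      rcases fin_addCases_cases i with ⟨j, rfl⟩ | ⟨j, rfl⟩
      · rw [Fin.addCases_left]
        exact Matrix.isHermitian_zero
      · rw [Fin.addCases_right]
        exact real_smul_hermitian' _ (hM₂ j).isHermitian
    · intro i
      rcases fin_addCases_cases i with ⟨j, rfl⟩ | ⟨j, rfl⟩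
      · rw [Fin.addCases_left]; exact hρ₁ j
      · rw [Fin.addCases_right]; rw [hmm₁]; exact isState_mm' (A' × B')
    · intro i
      rcases fin_addCases_cases i with ⟨j, rfl⟩ | ⟨j, rfl⟩
      · rw [Fin.addCases_left]; rw [hmm₂]; exact isState_mm' (B' × C')
      · rw [Fin.addCases_right]; exact hρ₂ j
    · intro 𝓛₁ 𝓛₂ hch₁ hch₂ hcomp
      have e₁ : ∀ (𝓛 : Matrix (A' × B') (A' × B') ℂ →ₗ[ℂ] Matrix (A × B) (A × B) ℂ),
          (∑ i : Fin (n₁ + n₂),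
            (((Fin.addCases (motive := fun _ => Matrix (A × B) (A × B) ℂ)
                (fun i => (((p₁ * q₁ i : ℝ)) : ℂ) • M₁ i) (fun _ => 0) i) *
              𝓛 (Fin.addCases (motive := fun _ => Matrix (A' × B') (A' × B') ℂ)
                ρ₁ (fun _ => mm₁) i)).trace).re)
          = p₁ * ∑ i, q₁ i * ((M₁ i * 𝓛 (ρ₁ i)).trace).re := by
        intro 𝓛
        rw [Fin.sum_univ_add]
        simp only [Fin.addCases_left, Fin.addCases_right, Matrix.zero_mul,
          Matrix.trace_zero, Complex.zero_re, Finset.sum_const_zero, add_zero]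
        rw [Finset.mul_sum]
        exact Finset.sum_congr rfl fun i _ => by
          rw [trace_real_smul_mul_re']; ring
      have e₂ : ∀ (𝓛 : Matrix (B' × C') (B' × C') ℂ →ₗ[ℂ] Matrix (B × C) (B × C) ℂ),
          (∑ i : Fin (n₁ + n₂),
            (((Fin.addCases (motive := fun _ => Matrix (B × C) (B × C) ℂ)
                (fun _ => 0) (fun j => (((p₂ * q₂ j : ℝ)) : ℂ) • M₂ j) i) *
              𝓛 (Fin.addCases (motive := fun _ => Matrix (B' × C') (B' × C') ℂ)
                (fun _ => mm₂) ρ₂ i)).trace).re)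
          = p₂ * ∑ j, q₂ j * ((M₂ j * 𝓛 (ρ₂ j)).trace).re := by
        intro 𝓛
        rw [Fin.sum_univ_add]
        simp only [Fin.addCases_left, Fin.addCases_right, Matrix.zero_mul,
          Matrix.trace_zero, Complex.zero_re, Finset.sum_const_zero, zero_add]
        rw [Finset.mul_sum]
        exact Finset.sum_congr rfl fun j _ => by
          rw [trace_real_smul_mul_re']; ring
      rw [e₁ 𝓛₁, e₂ 𝓛₂, e₁ 𝓔₁, e₂ 𝓔₂]
      exact hlt 𝓛₁ 𝓛₂ hch₁ hch₂ hcomp
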